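/- Let 1 < p < ∞ with conjugate q, and let x = (x_n) be a nonzero element of ⊕_p X_n. Then the diameter of the set of support functionals satisfies D(x) = (∑_n (‖x_n‖^p/‖x‖_p^p) · D(x_n)^q)^{1/q}, where D(x_n) is the diameter of J(x_n) (taken as 0 when x_n = 0). -/

import Mathlib

open scoped Classical

open scoped ENNReal

/-- The set of norm-one support functionals of an element of a normed space. -/
def suppFunctionals {X : Type*} [NormedAddCommGroup X] [NormedSpace ℝ X] (x : X) :
    Set (X →L[ℝ] ℝ) :=
  {f | ‖f‖ = 1 ∧ f x = ‖x‖}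

section Helpers

/-- If `θ * c ≤ d` for all `θ ∈ (0,1)` then `c ≤ d` (for `c ≥ 0`). -/
lemma aux_le_of_forall_mul_le {c d : ℝ} (hc : 0 ≤ c)
    (h : ∀ θ : ℝ, 0 < θ → θ < 1 → θ * c ≤ d) : c ≤ d := by
  rcases hc.eq_or_lt with h0 | h0
  · have := h (1/2) (by norm_num) (by norm_num)
    rw [← h0] at this ⊢
    linarith
  · by_contra hcd
    push_neg at hcd
    have h1 : d / c < 1 := (div_lt_one h0).2 hcd
    set θ := (max (d / c) 0 + 1) / 2 with hθdef
    have hmax0 : 0 ≤ max (d / c) 0 := le_max_right _ _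
    have hmax1 : max (d / c) 0 < 1 := max_lt h1 zero_lt_one
    have hθ0 : 0 < θ := by rw [hθdef]; linarith
    have hθ1 : θ < 1 := by rw [hθdef]; linarith
    have hgt : d / c < θ := by
      have := le_max_left (d / c) 0
      rw [hθdef]; linarith
    have : d < θ * c := (div_lt_iff₀ h0).1 hgt
    linarith [h θ hθ0 hθ1]

/-- Equality case in Young's inequality. -/
lemma young_eq {p q a b : ℝ} (hpq : p.HolderConjugate q) (ha : 0 ≤ a) (hb : 0 ≤ b)
    (h : a * b = a ^ p / p + b ^ q / q) : a ^ p = b ^ q := by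
  set t := b ^ (q - 1) with htdef
  have ht0 : 0 ≤ t := Real.rpow_nonneg hb _
  have htp : t ^ p = b ^ q := by
    rw [htdef, ← Real.rpow_mul hb, hpq.symm.sub_one_mul_conj]
  have htb : t * b = b ^ q := by
    rcases hb.eq_or_lt with hb0 | hb0
    · rw [← hb0, mul_zero, Real.zero_rpow hpq.symm.ne_zero]
    · rw [htdef]
      nth_rewrite 2 [show b = b ^ (1:ℝ) by rw [Real.rpow_one]]
      rw [← Real.rpow_add hb0, sub_add_cancel]
  have hyt : t * b = t ^ p / p + b ^ q / q := by
    rw [htb, htp, div_eq_mul_inv, div_eq_mul_inv, ← mul_add, hpq.inv_add_inv_eq_one, mul_one]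
  have key : a = t := by
    by_contra hat
    have hmid := Real.young_inequality_of_nonneg
      (a := (1/2 : ℝ) * a + (1/2 : ℝ) * t) (b := b) (by positivity) hb hpq
    have hconv := (strictConvexOn_rpow hpq.lt).2 (Set.mem_Ici.2 ha) (Set.mem_Ici.2 ht0)
      hat (by norm_num : (0:ℝ) < 1/2) (by norm_num : (0:ℝ) < 1/2) (by norm_num)
    simp only [smul_eq_mul] at hconv
    have hp0 : 0 < p := hpq.pos
    have h2 : ((1/2:ℝ) * a + (1/2:ℝ) * t) ^ p / p < ((1/2:ℝ) * (a ^ p) + (1/2:ℝ) * (t ^ p)) / p :=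
      div_lt_div_of_pos_right hconv hp0
    have h3 : ((1/2:ℝ) * (a ^ p) + (1/2:ℝ) * (t ^ p)) / p
        = (1/2:ℝ) * (a ^ p / p) + (1/2:ℝ) * (t ^ p / p) := by ring
    have h4 : ((1/2:ℝ) * a + (1/2:ℝ) * t) * b = (1/2:ℝ) * (a * b) + (1/2:ℝ) * (t * b) := by ring
    rw [h4, h, hyt] at hmid
    rw [h3] at h2
    linarith
  rw [key]; exact htp

lemma rpow_sub_one_mul {r e : ℝ} (hr : 0 < r) : r ^ (e - 1) * r = r ^ e := by
  nth_rewrite 2 [← Real.rpow_one r]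
  rw [← Real.rpow_add hr, sub_add_cancel]

end Helpers

/-- Forcing termwise equality from equality of sums. -/
lemma tsum_forcing {f g : ℕ → ℝ} (hf : Summable f) (hg : Summable g)
    (hle : ∀ n, f n ≤ g n) (hsum : ∑' n, g n ≤ ∑' n, f n) : ∀ n, f n = g n := by
  intro n
  by_contra hne
  have h1 : f n < g n := (hle n).lt_of_ne hne
  have := Summable.tsum_lt_tsum hle h1 hf hg
  linarith

section LpDuality

variable {E : ℕ → Type*} [∀ n, NormedAddCommGroup (E n)] [∀ n, NormedSpace ℝ (E n)]
variable {p q : ℝ}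

/-- `lp.single` as a continuous linear map. -/
noncomputable def lpSingleCLM (P : ℝ≥0∞) [Fact (1 ≤ P)] (hP : 0 < P.toReal) (n : ℕ) :
    E n →L[ℝ] lp E P := by
  refine LinearMap.mkContinuous
    { toFun := fun v => lp.single P n v
      map_add' := fun v w => ?_
      map_smul' := fun c v => ?_ } 1 (fun v => ?_)
  · apply lp.ext
    ext j
    rcases eq_or_ne j n with rfl | hj
    · simp [lp.single_apply_self]
    · simp [lp.single_apply_ne P n _ hj]
  · apply lp.ext
    ext j
    rcases eq_or_ne j n with rfl | hj
    · simp [lp.single_apply_self]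
    · simp [lp.single_apply_ne P n _ hj]
  · rw [one_mul]
    show ‖lp.single P n v‖ ≤ ‖v‖
    have : lp.single P n v = lp.single P n ((Pi.single n v : ∀ i, E i) n) := by
      rw [Pi.single_eq_same]
    rw [this, lp.norm_single (ENNReal.toReal_pos_iff.mp hP).1, Pi.single_eq_same]

@[simp] lemma lpSingleCLM_apply (P : ℝ≥0∞) [Fact (1 ≤ P)] (hP : 0 < P.toReal) (n : ℕ)
    (v : E n) : lpSingleCLM P hP n v = lp.single P n v := rfl

lemma norm_lpSingle (P : ℝ≥0∞) [Fact (1 ≤ P)] (hP : 0 < P.toReal) (n : ℕ) (v : E n) :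
    ‖lp.single P n v‖ = ‖v‖ := by
  have : lp.single P n v = lp.single P n ((Pi.single n v : ∀ i, E i) n) := by
    rw [Pi.single_eq_same]
  rw [this, lp.norm_single (ENNReal.toReal_pos_iff.mp hP).1, Pi.single_eq_same]

/-- The components of a functional on an lp-sum. -/
noncomputable def dcomp (P : ℝ≥0∞) [Fact (1 ≤ P)] (hP : 0 < P.toReal)
    (h : lp E P →L[ℝ] ℝ) (n : ℕ) : E n →L[ℝ] ℝ :=
  h.comp (lpSingleCLM P hP n)

lemma dcomp_apply (P : ℝ≥0∞) [Fact (1 ≤ P)] (hP : 0 < P.toReal)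
    (h : lp E P →L[ℝ] ℝ) (n : ℕ) (v : E n) :
    dcomp P hP h n v = h (lp.single P n v) := rfl

lemma dcomp_sub (P : ℝ≥0∞) [Fact (1 ≤ P)] (hP : 0 < P.toReal)
    (h h' : lp E P →L[ℝ] ℝ) (n : ℕ) :
    dcomp P hP (h - h') n = dcomp P hP h n - dcomp P hP h' n := by
  ext v; rfl

/-- A continuous functional is recovered from its components. -/
lemma hasSum_dcomp (P : ℝ≥0∞) [Fact (1 ≤ P)] (hP : 0 < P.toReal) (hPt : P ≠ ⊤)
    (h : lp E P →L[ℝ] ℝ) (f : lp E P) :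
    HasSum (fun n => dcomp P hP h n (f n)) (h f) :=
  (lp.hasSum_single hPt f).mapL h


lemma hP0 (hpq : p.HolderConjugate q) : 0 < (ENNReal.ofReal p).toReal := by
  rw [ENNReal.toReal_ofReal hpq.nonneg]; exact hpq.pos

lemma hPt : (ENNReal.ofReal p) ≠ ⊤ := ENNReal.ofReal_ne_top

/-- Key duality estimate: finite q-sums of component norms are dominated by the norm. -/
lemma finsum_dcomp_le (hpq : p.HolderConjugate q) [Fact (1 ≤ ENNReal.ofReal p)]
    (h : lp E (ENNReal.ofReal p) →L[ℝ] ℝ) (s : Finset ℕ) :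
    (∑ n ∈ s, ‖dcomp (ENNReal.ofReal p) (hP0 hpq) h n‖ ^ q) ^ (1/q) ≤ ‖h‖ := by
  set P := ENNReal.ofReal p with hPdef
  have hP : 0 < P.toReal := hP0 hpq
  have hPp : P.toReal = p := ENNReal.toReal_ofReal hpq.nonneg
  set T := ∑ n ∈ s, ‖dcomp P hP h n‖ ^ q with hTdef
  have hT0 : 0 ≤ T :=
    Finset.sum_nonneg fun n _ => Real.rpow_nonneg (norm_nonneg _) q
  refine aux_le_of_forall_mul_le (Real.rpow_nonneg hT0 _) (fun θ hθ0 hθ1 => ?_)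
  have hu : ∀ n, ∃ u : E n, ‖u‖ ≤ 1 ∧ θ * ‖dcomp P hP h n‖ ≤ dcomp P hP h n u := by
    intro n
    rcases (norm_nonneg (dcomp P hP h n)).eq_or_lt with h0 | h0
    · exact ⟨0, by simp, by simp [← h0]⟩
    · have hlt : θ * ‖dcomp P hP h n‖ < ‖dcomp P hP h n‖ := by nlinarith
      obtain ⟨u, hu1, hu2⟩ := (dcomp P hP h n).exists_lt_apply_of_lt_opNorm hlt
      rcases le_total 0 (dcomp P hP h n u) with hsgn | hsgn
      · rw [Real.norm_eq_abs, abs_of_nonneg hsgn] at hu2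
        exact ⟨u, hu1.le, hu2.le⟩
      · rw [Real.norm_eq_abs, abs_of_nonpos hsgn] at hu2
        refine ⟨-u, by simpa using hu1.le, ?_⟩
        rw [map_neg]; exact hu2.le
  choose u hu1 hu2 using hu
  set t : ℕ → ℝ := fun n => dcomp P hP h n (u n) with htdef
  have ht0 : ∀ n, 0 ≤ t n := fun n =>
    le_trans (mul_nonneg hθ0.le (norm_nonneg _)) (hu2 n)
  set y : lp E P := ∑ n ∈ s, lp.single P n ((t n ^ (q-1)) • u n) with hydef
  have hq1 : q - 1 ≠ 0 := hpq.symm.sub_one_ne_zero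
  have hval : h y = ∑ n ∈ s, t n ^ q := by
    rw [hydef, map_sum]
    refine Finset.sum_congr rfl (fun n _ => ?_)
    have hrfl : h (lp.single P n ((t n ^ (q-1)) • u n))
        = dcomp P hP h n ((t n ^ (q-1)) • u n) := rfl
    rw [hrfl, map_smul, smul_eq_mul]
    rcases (ht0 n).eq_or_lt with h0 | h0
    · rw [← h0, Real.zero_rpow hq1, Real.zero_rpow hpq.symm.ne_zero, zero_mul]
    · show t n ^ (q-1) * t n = t n ^ q
      nth_rewrite 2 [← Real.rpow_one (t n)]
      rw [← Real.rpow_add h0, sub_add_cancel]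
  have hnormy : ‖y‖ ^ p ≤ ∑ n ∈ s, t n ^ q := by
    have hns := lp.norm_sum_single (p := P) hP (fun n => (t n ^ (q-1)) • u n) s
    rw [hPp] at hns
    rw [hydef, hns]
    refine Finset.sum_le_sum fun n _ => ?_
    have h2 : ‖(t n ^ (q-1)) • u n‖ ≤ t n ^ (q-1) := by
      rw [norm_smul, Real.norm_eq_abs, abs_of_nonneg (Real.rpow_nonneg (ht0 n) _)]
      exact mul_le_of_le_one_right (Real.rpow_nonneg (ht0 n) _) (hu1 n)
    calc ‖(t n ^ (q-1)) • u n‖ ^ p ≤ (t n ^ (q-1)) ^ p :=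
          Real.rpow_le_rpow (norm_nonneg _) h2 hpq.nonneg
      _ = t n ^ q := by
          rw [← Real.rpow_mul (ht0 n), hpq.symm.sub_one_mul_conj]
  set A := ∑ n ∈ s, t n ^ q with hAdef
  have hA0 : 0 ≤ A := Finset.sum_nonneg fun n _ => Real.rpow_nonneg (ht0 n) q
  have hyA : A ≤ ‖h‖ * A ^ (1/p) := by
    have h3 : ‖y‖ ≤ A ^ (1/p) := by
      have := Real.rpow_le_rpow (Real.rpow_nonneg (norm_nonneg y) p) hnormy
        hpq.one_div_nonneg
      rwa [← Real.rpow_mul (norm_nonneg y), mul_one_div, div_self hpq.ne_zero,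
        Real.rpow_one] at this
    calc A = h y := hval.symm
      _ ≤ ‖h‖ * ‖y‖ := le_trans (le_abs_self _) (h.le_opNorm y)
      _ ≤ ‖h‖ * A ^ (1/p) := by
          exact mul_le_mul_of_nonneg_left h3 (norm_nonneg h)
  have hθT : θ ^ q * T ≤ A := by
    rw [hTdef, Finset.mul_sum]
    refine Finset.sum_le_sum fun n _ => ?_
    rw [← Real.mul_rpow hθ0.le (norm_nonneg _)]
    exact Real.rpow_le_rpow (mul_nonneg hθ0.le (norm_nonneg _)) (hu2 n) hpq.symm.nonneg
  rcases hA0.eq_or_lt with hA | hA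
  · have hθq : 0 < θ ^ q := Real.rpow_pos_of_pos hθ0 q
    have hT : T = 0 := by nlinarith
    rw [hT, Real.zero_rpow (one_div_ne_zero hpq.symm.ne_zero), mul_zero]
    exact norm_nonneg h
  · have hAle : A ^ (1/q) ≤ ‖h‖ := by
      have h5 : A ^ (1/p) * A ^ (1/q) = A := by
        rw [← Real.rpow_add hA, one_div, one_div, hpq.inv_add_inv_eq_one, Real.rpow_one]
      have hApos : 0 < A ^ (1/p) := Real.rpow_pos_of_pos hA _
      have h6 : A ^ (1/p) * A ^ (1/q) ≤ ‖h‖ * A ^ (1/p) := h5.symm ▸ hyA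
      calc A ^ (1/q) = (A ^ (1/p) * A ^ (1/q)) / A ^ (1/p) := by
            field_simp
        _ ≤ (‖h‖ * A ^ (1/p)) / A ^ (1/p) := by
            gcongr
        _ = ‖h‖ := by field_simp
    have hmul : θ * T ^ (1/q) = (θ ^ q * T) ^ (1/q) := by
      rw [Real.mul_rpow (Real.rpow_nonneg hθ0.le q) hT0, ← Real.rpow_mul hθ0.le,
        mul_one_div, div_self hpq.symm.ne_zero, Real.rpow_one]
    rw [hmul]
    exact le_trans (Real.rpow_le_rpow (by positivity) hθT hpq.symm.one_div_nonneg) hAle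

lemma summable_dcomp (hpq : p.HolderConjugate q) [Fact (1 ≤ ENNReal.ofReal p)]
    (h : lp E (ENNReal.ofReal p) →L[ℝ] ℝ) :
    Summable (fun n => ‖dcomp (ENNReal.ofReal p) (hP0 hpq) h n‖ ^ q) := by
  apply summable_of_sum_le (c := ‖h‖ ^ q)
    (fun n => Real.rpow_nonneg (norm_nonneg _) q)
  intro s
  have h1 := finsum_dcomp_le hpq h s
  have h2 := Real.rpow_le_rpow (Real.rpow_nonneg
    (Finset.sum_nonneg fun n _ => Real.rpow_nonneg (norm_nonneg _) q) _) h1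
    hpq.symm.nonneg
  rwa [← Real.rpow_mul (Finset.sum_nonneg fun n _ => Real.rpow_nonneg (norm_nonneg _) q),
    one_div_mul_cancel hpq.symm.ne_zero, Real.rpow_one] at h2

lemma tsum_dcomp_le (hpq : p.HolderConjugate q) [Fact (1 ≤ ENNReal.ofReal p)]
    (h : lp E (ENNReal.ofReal p) →L[ℝ] ℝ) :
    (∑' n, ‖dcomp (ENNReal.ofReal p) (hP0 hpq) h n‖ ^ q) ^ (1/q) ≤ ‖h‖ := by
  have hs := summable_dcomp hpq h
  have ht0 : 0 ≤ ∑' n, ‖dcomp (ENNReal.ofReal p) (hP0 hpq) h n‖ ^ q :=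
    tsum_nonneg fun n => Real.rpow_nonneg (norm_nonneg _) q
  have key : ∑' n, ‖dcomp (ENNReal.ofReal p) (hP0 hpq) h n‖ ^ q ≤ ‖h‖ ^ q := by
    refine Summable.tsum_le_of_sum_le hs (fun s => ?_)
    have h1 := finsum_dcomp_le hpq h s
    have h2 := Real.rpow_le_rpow (Real.rpow_nonneg
      (Finset.sum_nonneg fun n _ => Real.rpow_nonneg (norm_nonneg _) q) _) h1
      hpq.symm.nonneg
    rwa [← Real.rpow_mul (Finset.sum_nonneg fun n _ => Real.rpow_nonneg (norm_nonneg _) q),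
      one_div_mul_cancel hpq.symm.ne_zero, Real.rpow_one] at h2
  have h3 := Real.rpow_le_rpow ht0 key hpq.symm.one_div_nonneg
  rwa [← Real.rpow_mul (norm_nonneg h), mul_one_div, div_self hpq.symm.ne_zero,
    Real.rpow_one] at h3

/-- The dual norm formula: `‖h‖ = (∑ ‖h_n‖^q)^(1/q)`. -/
lemma norm_eq_tsum_dcomp (hpq : p.HolderConjugate q) [Fact (1 ≤ ENNReal.ofReal p)]
    (h : lp E (ENNReal.ofReal p) →L[ℝ] ℝ) :
    ‖h‖ = (∑' n, ‖dcomp (ENNReal.ofReal p) (hP0 hpq) h n‖ ^ q) ^ (1/q) := by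
  set P := ENNReal.ofReal p
  have hP : 0 < P.toReal := hP0 hpq
  have hPp : P.toReal = p := ENNReal.toReal_ofReal hpq.nonneg
  refine le_antisymm ?_ (tsum_dcomp_le hpq h)
  set M := (∑' n, ‖dcomp P hP h n‖ ^ q) ^ (1/q) with hMdef
  have hM0 : 0 ≤ M := Real.rpow_nonneg
    (tsum_nonneg fun n => Real.rpow_nonneg (norm_nonneg _) q) _
  refine h.opNorm_le_bound hM0 (fun f => ?_)
  have hnormf : ‖f‖ = (∑' n, ‖f n‖ ^ p) ^ (1/p) := by
    rw [lp.norm_eq_tsum_rpow hP f, hPp]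
  have hfsum : Summable (fun n => ‖f n‖ ^ p) := by
    have := (lp.memℓp f).summable hP
    rwa [hPp] at this
  have hhsum := summable_dcomp hpq h
  obtain ⟨hsum_mul, hle_mul⟩ := Real.summable_and_inner_le_Lp_mul_Lq_tsum_of_nonneg hpq
    (fun n => norm_nonneg (f n)) (fun n => norm_nonneg (dcomp P hP h n)) hfsum hhsum
  have happ : HasSum (fun n => dcomp P hP h n (f n)) (h f) :=
    hasSum_dcomp P hP hPt h f
  have hbound : ∀ n, ‖dcomp P hP h n (f n)‖ ≤ ‖f n‖ * ‖dcomp P hP h n‖ := fun n => by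
    rw [mul_comm]; exact (dcomp P hP h n).le_opNorm (f n)
  have hsummable_abs : Summable (fun n => ‖dcomp P hP h n (f n)‖) :=
    Summable.of_nonneg_of_le (fun n => norm_nonneg _) hbound hsum_mul
  calc ‖h f‖ = ‖∑' n, dcomp P hP h n (f n)‖ := by rw [happ.tsum_eq]
    _ ≤ ∑' n, ‖dcomp P hP h n (f n)‖ := norm_tsum_le_tsum_norm hsummable_abs
    _ ≤ ∑' n, ‖f n‖ * ‖dcomp P hP h n‖ :=
        Summable.tsum_le_tsum hbound hsummable_abs hsum_mul
    _ ≤ (∑' n, ‖f n‖ ^ p) ^ (1/p) * (∑' n, ‖dcomp P hP h n‖ ^ q) ^ (1/q) := hle_mul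
    _ = M * ‖f‖ := by rw [hnormf, hMdef, mul_comm]

section mk

variable (hpq : p.HolderConjugate q) [Fact (1 ≤ ENNReal.ofReal p)]
variable (g : ∀ n, E n →L[ℝ] ℝ) (hg : Summable (fun n => ‖g n‖ ^ q))

include hpq hg in
lemma mk_summable (f : lp E (ENNReal.ofReal p)) : Summable (fun n => g n (f n)) := by
  have hfsum : Summable (fun n => ‖f n‖ ^ p) := by
    have := (lp.memℓp f).summable (hP0 hpq)
    rwa [ENNReal.toReal_ofReal hpq.nonneg] at this
  have hsum_mul := Real.summable_mul_of_Lp_Lq_of_nonneg hpq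
    (fun n => norm_nonneg (f n)) (fun n => norm_nonneg (g n)) hfsum hg
  refine Summable.of_norm (Summable.of_nonneg_of_le (fun n => norm_nonneg _)
    (fun n => ?_) hsum_mul)
  rw [mul_comm]; exact (g n).le_opNorm (f n)

/-- Build a functional on the lp-sum from components. -/
noncomputable def mkCLM : lp E (ENNReal.ofReal p) →L[ℝ] ℝ := by
  refine LinearMap.mkContinuous
    { toFun := fun f => ∑' n, g n (f n)
      map_add' := fun f f' => ?_
      map_smul' := fun c f => ?_ }
    ((∑' n, ‖g n‖ ^ q) ^ (1/q)) (fun f => ?_)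
  · have h1 := mk_summable hpq g hg f
    have h2 := mk_summable hpq g hg f'
    rw [← Summable.tsum_add h1 h2]
    exact tsum_congr fun n => by
      rw [lp.coeFn_add, Pi.add_apply, map_add]
  · simp only [RingHom.id_apply, smul_eq_mul]
    rw [← tsum_mul_left]
    exact tsum_congr fun n => by
      rw [lp.coeFn_smul, Pi.smul_apply, map_smul, smul_eq_mul]
  · have hfsum : Summable (fun n => ‖f n‖ ^ p) := by
      have := (lp.memℓp f).summable (hP0 hpq)
      rwa [ENNReal.toReal_ofReal hpq.nonneg] at this
    obtain ⟨hsum_mul, hle_mul⟩ := Real.summable_and_inner_le_Lp_mul_Lq_tsum_of_nonneg hpq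
      (fun n => norm_nonneg (f n)) (fun n => norm_nonneg (g n)) hfsum hg
    have hbound : ∀ n, ‖g n (f n)‖ ≤ ‖f n‖ * ‖g n‖ := fun n => by
      rw [mul_comm]; exact (g n).le_opNorm (f n)
    have habs : Summable (fun n => ‖g n (f n)‖) :=
      Summable.of_nonneg_of_le (fun n => norm_nonneg _) hbound hsum_mul
    have hnormf : ‖f‖ = (∑' n, ‖f n‖ ^ p) ^ (1/p) := by
      rw [lp.norm_eq_tsum_rpow (hP0 hpq) f, ENNReal.toReal_ofReal hpq.nonneg]
    calc ‖∑' n, g n (f n)‖ ≤ ∑' n, ‖g n (f n)‖ := norm_tsum_le_tsum_norm habs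
      _ ≤ ∑' n, ‖f n‖ * ‖g n‖ := Summable.tsum_le_tsum hbound habs hsum_mul
      _ ≤ (∑' n, ‖f n‖ ^ p) ^ (1/p) * (∑' n, ‖g n‖ ^ q) ^ (1/q) := hle_mul
      _ = (∑' n, ‖g n‖ ^ q) ^ (1/q) * ‖f‖ := by rw [hnormf, mul_comm]

lemma mkCLM_apply (f : lp E (ENNReal.ofReal p)) :
    mkCLM hpq g hg f = ∑' n, g n (f n) := rfl

lemma dcomp_mkCLM (n : ℕ) :
    dcomp (ENNReal.ofReal p) (hP0 hpq) (mkCLM hpq g hg) n = g n := by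
  ext v
  rw [dcomp_apply, mkCLM_apply]
  rw [tsum_eq_single n (fun m hm => ?_)]
  · rw [lp.single_apply_self]
  · rw [lp.single_apply_ne _ _ _ hm, map_zero]

end mk

/-- Components of a support functional: equality analysis in Hölder. -/
lemma supp_char (hpq : p.HolderConjugate q) [Fact (1 ≤ ENNReal.ofReal p)]
    (x : lp E (ENNReal.ofReal p)) (hx : x ≠ 0)
    (h : lp E (ENNReal.ofReal p) →L[ℝ] ℝ) (hn : ‖h‖ = 1) (hfx : h x = ‖x‖) :
    ∀ n, dcomp (ENNReal.ofReal p) (hP0 hpq) h n (x n)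
        = ‖dcomp (ENNReal.ofReal p) (hP0 hpq) h n‖ * ‖x n‖ ∧
      ‖dcomp (ENNReal.ofReal p) (hP0 hpq) h n‖ = (‖x n‖ / ‖x‖) ^ (p-1) := by
  have hP : 0 < (ENNReal.ofReal p).toReal := hP0 hpq
  have hPp : (ENNReal.ofReal p).toReal = p := ENNReal.toReal_ofReal hpq.nonneg
  have hX : (0:ℝ) < ‖x‖ := norm_pos_iff.mpr hx
  suffices H : ∀ n, dcomp (ENNReal.ofReal p) hP h n (x n)
        = ‖dcomp (ENNReal.ofReal p) hP h n‖ * ‖x n‖ ∧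
      ‖dcomp (ENNReal.ofReal p) hP h n‖ = (‖x n‖ / ‖x‖) ^ (p-1) by exact H
  set a : ℕ → ℝ := fun n => ‖x n‖ / ‖x‖ with hadef
  set b : ℕ → ℝ := fun n => ‖dcomp (ENNReal.ofReal p) hP h n‖ with hbdef
  have ha0 : ∀ n, 0 ≤ a n := fun n => div_nonneg (norm_nonneg _) hX.le
  have hb0 : ∀ n, 0 ≤ b n := fun n => norm_nonneg _
  have ha_sum : HasSum (fun n => a n ^ p) 1 := by
    have h1 := lp.hasSum_norm hP x
    rw [hPp] at h1
    have h2 := h1.div_const (‖x‖ ^ p)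
    rw [div_self (Real.rpow_pos_of_pos hX p).ne'] at h2
    have hfun : (fun n => a n ^ p) = fun i => ‖x i‖ ^ p / ‖x‖ ^ p := by
      funext n
      simp only [hadef]
      rw [Real.div_rpow (norm_nonneg _) hX.le]
    rw [hfun]; exact h2
  have hb_summable : Summable (fun n => b n ^ q) := summable_dcomp hpq h
  have hb_tsum : ∑' n, b n ^ q ≤ 1 := by
    have h1 := tsum_dcomp_le hpq h
    rw [hn] at h1
    have h2 := Real.rpow_le_rpow (Real.rpow_nonneg
      (tsum_nonneg fun n => Real.rpow_nonneg (norm_nonneg _) q) _) h1 hpq.symm.nonneg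
    rwa [← Real.rpow_mul (tsum_nonneg fun n => Real.rpow_nonneg (norm_nonneg _) q),
      one_div_mul_cancel hpq.symm.ne_zero, Real.rpow_one, Real.one_rpow] at h2
  have hc : HasSum (fun n => dcomp (ENNReal.ofReal p) hP h n (x n) / ‖x‖) 1 := by
    have h1 := (hasSum_dcomp (ENNReal.ofReal p) hP hPt h x).div_const ‖x‖
    rwa [hfx, div_self hX.ne'] at h1
  have hpt1 : ∀ n, dcomp (ENNReal.ofReal p) hP h n (x n) / ‖x‖ ≤ a n * b n := by
    intro n
    have h1 : dcomp (ENNReal.ofReal p) hP h n (x n) ≤ b n * ‖x n‖ :=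
      le_trans (le_abs_self _) ((dcomp (ENNReal.ofReal p) hP h n).le_opNorm (x n))
    have h2 : a n * b n = (b n * ‖x n‖) / ‖x‖ := by
      rw [hadef]; ring
    rw [h2]
    gcongr
  have hpt2 : ∀ n, a n * b n ≤ a n ^ p / p + b n ^ q / q := fun n =>
    Real.young_inequality_of_nonneg (ha0 n) (hb0 n) hpq
  have hsum_ab : Summable (fun n => a n * b n) :=
    Real.summable_mul_of_Lp_Lq_of_nonneg hpq ha0 hb0 ha_sum.summable hb_summable
  have hsum_young : Summable (fun n => a n ^ p / p + b n ^ q / q) :=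
    (ha_sum.summable.div_const p).add (hb_summable.div_const q)
  have s4 : ∑' n, (a n ^ p / p + b n ^ q / q) ≤ 1 := by
    rw [Summable.tsum_add (ha_sum.summable.div_const p) (hb_summable.div_const q),
      tsum_div_const, tsum_div_const, ha_sum.tsum_eq]
    have h1 : (∑' n, b n ^ q) / q ≤ 1 / q := by
      gcongr
      exact hpq.symm.pos.le
    have h2 := hpq.inv_add_inv_eq_one
    rw [← one_div, ← one_div] at h2
    linarith
  have s1 : ∑' n, dcomp (ENNReal.ofReal p) hP h n (x n) / ‖x‖ = 1 := hc.tsum_eq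
  have s2 : ∑' n, a n * b n ≤ ∑' n, dcomp (ENNReal.ofReal p) hP h n (x n) / ‖x‖ := by
    rw [s1]
    exact le_trans (Summable.tsum_le_tsum hpt2 hsum_ab hsum_young) s4
  have eq1 : ∀ n, dcomp (ENNReal.ofReal p) hP h n (x n) / ‖x‖ = a n * b n :=
    tsum_forcing hc.summable hsum_ab hpt1 s2
  have s3 : ∑' n, (a n ^ p / p + b n ^ q / q) ≤ ∑' n, a n * b n := by
    have h1 : ∑' n, dcomp (ENNReal.ofReal p) hP h n (x n) / ‖x‖ ≤ ∑' n, a n * b n :=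
      Summable.tsum_le_tsum hpt1 hc.summable hsum_ab
    rw [s1] at h1
    exact le_trans s4 h1
  have eq2 : ∀ n, a n * b n = a n ^ p / p + b n ^ q / q :=
    tsum_forcing hsum_ab hsum_young hpt2 s3
  intro n
  have hyoung := young_eq hpq (ha0 n) (hb0 n) (eq2 n)
  constructor
  · have h1 := eq1 n
    have h2 : dcomp (ENNReal.ofReal p) hP h n (x n) = (a n * b n) * ‖x‖ := by
      rw [← h1]; field_simp
    rw [h2, hadef, hbdef]
    field_simp
  · have hb_eq : b n = a n ^ (p - 1) := by
      have h1 : b n = (b n ^ q) ^ (1/q) := by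
        rw [← Real.rpow_mul (hb0 n), mul_one_div, div_self hpq.symm.ne_zero, Real.rpow_one]
      rw [h1, ← hyoung, ← Real.rpow_mul (ha0 n), mul_one_div, hpq.div_conj_eq_sub_one]
    rw [hadef] at hb_eq
    exact hb_eq

section construct

variable (hpq : p.HolderConjugate q) [Fact (1 ≤ ENNReal.ofReal p)]
variable (x : lp E (ENNReal.ofReal p)) (hx : x ≠ 0)

include hpq hx in
lemma hasSum_apow : HasSum (fun n => (‖x n‖ / ‖x‖) ^ p) 1 := by
  have hX : (0:ℝ) < ‖x‖ := norm_pos_iff.mpr hx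
  have h1 := lp.hasSum_norm (hP0 hpq) x
  rw [ENNReal.toReal_ofReal hpq.nonneg] at h1
  have h2 := h1.div_const (‖x‖ ^ p)
  rw [div_self (Real.rpow_pos_of_pos hX p).ne'] at h2
  have hfun : (fun n => (‖x n‖ / ‖x‖) ^ p) = fun i => ‖x i‖ ^ p / ‖x‖ ^ p := by
    funext n
    rw [Real.div_rpow (norm_nonneg _) hX.le]
  rw [hfun]; exact h2

include hpq hx in
lemma lam_rpow_q (n : ℕ) : ((‖x n‖ / ‖x‖) ^ (p-1)) ^ q = (‖x n‖ / ‖x‖) ^ p := by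
  have hX : (0:ℝ) < ‖x‖ := norm_pos_iff.mpr hx
  rw [← Real.rpow_mul (div_nonneg (norm_nonneg _) hX.le), hpq.sub_one_mul_conj]

include hpq hx in
lemma lam_summable (g : ∀ n, E n →L[ℝ] ℝ) (hgle : ∀ n, ‖g n‖ ≤ 1) :
    Summable (fun n => ‖((‖x n‖ / ‖x‖) ^ (p-1)) • g n‖ ^ q) := by
  have hX : (0:ℝ) < ‖x‖ := norm_pos_iff.mpr hx
  refine Summable.of_nonneg_of_le (fun n => Real.rpow_nonneg (norm_nonneg _) _)
    (fun n => ?_) (hasSum_apow hpq x hx).summable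
  have hlam0 : 0 ≤ (‖x n‖ / ‖x‖) ^ (p-1) :=
    Real.rpow_nonneg (div_nonneg (norm_nonneg _) hX.le) _
  have h1 : ‖((‖x n‖ / ‖x‖) ^ (p-1)) • g n‖ ≤ (‖x n‖ / ‖x‖) ^ (p-1) := by
    refine le_trans (ContinuousLinearMap.opNorm_smul_le _ _) ?_
    rw [Real.norm_eq_abs, abs_of_nonneg hlam0]
    exact mul_le_of_le_one_right hlam0 (hgle n)
  calc ‖((‖x n‖ / ‖x‖) ^ (p-1)) • g n‖ ^ q ≤ ((‖x n‖ / ‖x‖) ^ (p-1)) ^ q :=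
        Real.rpow_le_rpow (norm_nonneg _) h1 hpq.symm.nonneg
    _ = (‖x n‖ / ‖x‖) ^ p := lam_rpow_q hpq x hx n

include hx in
lemma supp_construct (g : ∀ n, E n →L[ℝ] ℝ)
    (hg1 : ∀ n, x n ≠ 0 → ‖g n‖ = 1 ∧ g n (x n) = ‖x n‖)
    (hg0 : ∀ n, x n = 0 → g n = 0) :
    ‖mkCLM hpq (fun n => ((‖x n‖ / ‖x‖) ^ (p-1)) • g n)
        (lam_summable hpq x hx g (fun n => by
          rcases eq_or_ne (x n) 0 with h0 | h0
          · rw [hg0 n h0]; simp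
          · exact (hg1 n h0).1.le))‖ = 1 ∧
      mkCLM hpq (fun n => ((‖x n‖ / ‖x‖) ^ (p-1)) • g n)
        (lam_summable hpq x hx g (fun n => by
          rcases eq_or_ne (x n) 0 with h0 | h0
          · rw [hg0 n h0]; simp
          · exact (hg1 n h0).1.le)) x = ‖x‖ := by
  have hX : (0:ℝ) < ‖x‖ := norm_pos_iff.mpr hx
  set lam : ℕ → ℝ := fun n => (‖x n‖ / ‖x‖) ^ (p-1) with hlamdef
  have hlam0 : ∀ n, 0 ≤ lam n :=
    fun n => Real.rpow_nonneg (div_nonneg (norm_nonneg _) hX.le) _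
  set G := mkCLM hpq (fun n => lam n • g n)
    (lam_summable hpq x hx g (fun n => by
      rcases eq_or_ne (x n) 0 with h0 | h0
      · rw [hg0 n h0]; simp
      · exact (hg1 n h0).1.le)) with hGdef
  have happ : G x = ‖x‖ := by
    rw [hGdef, mkCLM_apply]
    have hterm : ∀ n, (lam n • g n) (x n) = (‖x n‖ / ‖x‖) ^ p * ‖x‖ := by
      intro n
      rcases eq_or_ne (x n) 0 with h0 | h0
      · rw [ContinuousLinearMap.smul_apply, hg0 n h0, h0]
        simp only [ContinuousLinearMap.zero_apply, smul_eq_mul, mul_zero]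
        rw [norm_zero, zero_div, Real.zero_rpow hpq.ne_zero, zero_mul]
      · rw [ContinuousLinearMap.smul_apply, (hg1 n h0).2, smul_eq_mul, hlamdef]
        have hxn : (0:ℝ) < ‖x n‖ := norm_pos_iff.mpr h0
        have han : (0:ℝ) < ‖x n‖ / ‖x‖ := div_pos hxn hX
        have hkey : ‖x n‖ = (‖x n‖ / ‖x‖) * ‖x‖ := by field_simp
        nth_rewrite 1 [hkey]
        rw [← mul_assoc]
        congr 1
        exact rpow_sub_one_mul han
    rw [tsum_congr hterm, tsum_mul_right, (hasSum_apow hpq x hx).tsum_eq, one_mul]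
  refine ⟨le_antisymm ?_ ?_, happ⟩
  · have hb : ‖G‖ ≤ (∑' n, ‖lam n • g n‖ ^ q) ^ (1/q) := by
      rw [hGdef]
      exact LinearMap.mkContinuous_norm_le _
        (Real.rpow_nonneg (tsum_nonneg fun n => Real.rpow_nonneg (norm_nonneg _) _) _) _
    refine le_trans hb ?_
    have h1 : ∑' n, ‖lam n • g n‖ ^ q ≤ 1 := by
      rw [← (hasSum_apow hpq x hx).tsum_eq]
      refine Summable.tsum_le_tsum (fun n => ?_)
        (lam_summable hpq x hx g (fun n => by
          rcases eq_or_ne (x n) 0 with h0 | h0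
          · rw [hg0 n h0]; simp
          · exact (hg1 n h0).1.le))
        (hasSum_apow hpq x hx).summable
      have hgle : ‖g n‖ ≤ 1 := by
        rcases eq_or_ne (x n) 0 with h0 | h0
        · rw [hg0 n h0]; simp
        · exact (hg1 n h0).1.le
      have h2 : ‖lam n • g n‖ ≤ lam n := by
        refine le_trans (ContinuousLinearMap.opNorm_smul_le _ _) ?_
        rw [Real.norm_eq_abs, abs_of_nonneg (hlam0 n)]
        exact mul_le_of_le_one_right (hlam0 n) hgle
      calc ‖lam n • g n‖ ^ q ≤ lam n ^ q :=
            Real.rpow_le_rpow (norm_nonneg _) h2 hpq.symm.nonneg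
        _ = (‖x n‖ / ‖x‖) ^ p := lam_rpow_q hpq x hx n
    calc (∑' n, ‖lam n • g n‖ ^ q) ^ (1/q) ≤ (1:ℝ) ^ (1/q) :=
          Real.rpow_le_rpow (tsum_nonneg fun n => Real.rpow_nonneg (norm_nonneg _) _)
            h1 hpq.symm.one_div_nonneg
      _ = 1 := Real.one_rpow _
  · have h1 : ‖x‖ ≤ ‖G‖ * ‖x‖ := by
      calc ‖x‖ = G x := happ.symm
        _ ≤ ‖G x‖ := le_abs_self _
        _ ≤ ‖G‖ * ‖x‖ := G.le_opNorm x
    nlinarith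

include hx in
lemma supp_exists (g : ∀ n, E n →L[ℝ] ℝ)
    (hg1 : ∀ n, x n ≠ 0 → ‖g n‖ = 1 ∧ g n (x n) = ‖x n‖)
    (hg0 : ∀ n, x n = 0 → g n = 0) :
    ∃ G : lp E (ENNReal.ofReal p) →L[ℝ] ℝ, ‖G‖ = 1 ∧ G x = ‖x‖ ∧
      ∀ n, dcomp (ENNReal.ofReal p) (hP0 hpq) G n = ((‖x n‖ / ‖x‖) ^ (p-1)) • g n := by
  obtain ⟨h1, h2⟩ := supp_construct hpq x hx g hg1 hg0
  exact ⟨_, h1, h2, fun n => dcomp_mkCLM hpq _ _ n⟩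

end construct

end LpDuality


section Final

variable {E : ℕ → Type*} [∀ n, NormedAddCommGroup (E n)] [∀ n, NormedSpace ℝ (E n)]
variable {p q : ℝ}

lemma supp_bounded {X : Type*} [NormedAddCommGroup X] [NormedSpace ℝ X] (y : X) :
    Bornology.IsBounded (suppFunctionals y) :=
  Metric.isBounded_closedBall.subset
    (fun f (hf : f ∈ suppFunctionals y) => mem_closedBall_zero_iff.mpr hf.1.le)

lemma supp_diam_le_two {X : Type*} [NormedAddCommGroup X] [NormedSpace ℝ X] (y : X) :
    Metric.diam (suppFunctionals y) ≤ 2 := by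
  have h1 := Metric.diam_mono
    (fun f (hf : f ∈ suppFunctionals y) => mem_closedBall_zero_iff.mpr hf.1.le)
    (Metric.isBounded_closedBall (x := (0 : X →L[ℝ] ℝ)) (r := 1))
  calc Metric.diam (suppFunctionals y) ≤ Metric.diam (Metric.closedBall (0 : X →L[ℝ] ℝ) 1) := h1
    _ ≤ 2 * 1 := Metric.diam_closedBall zero_le_one
    _ = 2 := by norm_num

theorem stmt7' (hpq : p.HolderConjugate q)
    [Fact (1 ≤ ENNReal.ofReal p)]
    (x : lp E (ENNReal.ofReal p)) (hx : x ≠ 0) :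
    Metric.diam (suppFunctionals x) =
      (∑' n, (‖x n‖ ^ p / ‖x‖ ^ p) *
        (if x n = 0 then 0 else Metric.diam (suppFunctionals (x n))) ^ q) ^ (1 / q) := by
  have hP : 0 < (ENNReal.ofReal p).toReal := hP0 hpq
  have hX : (0:ℝ) < ‖x‖ := norm_pos_iff.mpr hx
  set D : ℕ → ℝ := fun n => if x n = 0 then 0 else Metric.diam (suppFunctionals (x n))
    with hDdef
  have hD0 : ∀ n, 0 ≤ D n := by
    intro n; rw [hDdef]; dsimp only
    split
    · exact le_refl 0
    · exact Metric.diam_nonneg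
  have hD2 : ∀ n, D n ≤ 2 := by
    intro n; rw [hDdef]; dsimp only
    split
    · norm_num
    · exact supp_diam_le_two _
  have hterm_eq : ∀ n, ‖x n‖ ^ p / ‖x‖ ^ p * D n ^ q = (‖x n‖ / ‖x‖) ^ p * D n ^ q := by
    intro n
    rw [Real.div_rpow (norm_nonneg _) hX.le]
  have hrhs : (∑' n, (‖x n‖ ^ p / ‖x‖ ^ p) * D n ^ q)
      = ∑' n, (‖x n‖ / ‖x‖) ^ p * D n ^ q := tsum_congr hterm_eq
  set S := ∑' n, (‖x n‖ / ‖x‖) ^ p * D n ^ q with hSdef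
  have ha0 : ∀ n, (0:ℝ) ≤ (‖x n‖ / ‖x‖) ^ p :=
    fun n => Real.rpow_nonneg (div_nonneg (norm_nonneg _) hX.le) _
  have hSsum : Summable (fun n => (‖x n‖ / ‖x‖) ^ p * D n ^ q) := by
    refine Summable.of_nonneg_of_le
      (fun n => mul_nonneg (ha0 n) (Real.rpow_nonneg (hD0 n) _)) (fun n => ?_)
      ((hasSum_apow hpq x hx).summable.mul_right ((2:ℝ) ^ q))
    exact mul_le_mul_of_nonneg_left
      (Real.rpow_le_rpow (hD0 n) (hD2 n) hpq.symm.nonneg) (ha0 n)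
  have hS0 : 0 ≤ S := tsum_nonneg
    (fun n => mul_nonneg (ha0 n) (Real.rpow_nonneg (hD0 n) _))
  rw [hrhs]
  -- the two directions
  refine le_antisymm ?_ ?_
  · -- diam ≤ S ^ (1/q)
    refine Metric.diam_le_of_forall_dist_le (Real.rpow_nonneg hS0 _) (fun f hf f' hf' => ?_)
    have char := supp_char hpq x hx f hf.1 hf.2
    have char' := supp_char hpq x hx f' hf'.1 hf'.2
    rw [dist_eq_norm, norm_eq_tsum_dcomp hpq (f - f')]
    refine Real.rpow_le_rpow
      (tsum_nonneg fun n => Real.rpow_nonneg (norm_nonneg _) _) ?_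
      hpq.symm.one_div_nonneg
    refine Summable.tsum_le_tsum (fun n => ?_) (summable_dcomp hpq (f - f')) hSsum
    rw [dcomp_sub]
    rcases eq_or_ne (x n) 0 with h0 | h0
    · have hz : ‖dcomp (ENNReal.ofReal p) (hP0 hpq) f n‖ = 0 := by
        rw [(char n).2, h0, norm_zero, zero_div, Real.zero_rpow hpq.sub_one_ne_zero]
      have hz' : ‖dcomp (ENNReal.ofReal p) (hP0 hpq) f' n‖ = 0 := by
        rw [(char' n).2, h0, norm_zero, zero_div, Real.zero_rpow hpq.sub_one_ne_zero]
      rw [norm_eq_zero.mp hz, norm_eq_zero.mp hz', sub_zero, norm_zero,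
        Real.zero_rpow hpq.symm.ne_zero]
      exact mul_nonneg (ha0 n) (Real.rpow_nonneg (hD0 n) _)
    · have hxn : (0:ℝ) < ‖x n‖ := norm_pos_iff.mpr h0
      have han : (0:ℝ) < ‖x n‖ / ‖x‖ := div_pos hxn hX
      set lam := (‖x n‖ / ‖x‖) ^ (p-1) with hlamdef
      have hlam : (0:ℝ) < lam := Real.rpow_pos_of_pos han _
      set gf := lam⁻¹ • dcomp (ENNReal.ofReal p) (hP0 hpq) f n with hgfdef
      set gf' := lam⁻¹ • dcomp (ENNReal.ofReal p) (hP0 hpq) f' n with hgfdef'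
      have hmemf : gf ∈ suppFunctionals (x n) := by
        constructor
        · rw [hgfdef, norm_smul lam⁻¹ (dcomp (ENNReal.ofReal p) (hP0 hpq) f n),
            Real.norm_eq_abs, abs_of_pos (inv_pos.mpr hlam),
            (char n).2, ← hlamdef, inv_mul_cancel₀ hlam.ne']
        · rw [hgfdef]
          simp only [ContinuousLinearMap.smul_apply, smul_eq_mul]
          rw [(char n).1, (char n).2, ← hlamdef, ← mul_assoc, inv_mul_cancel₀ hlam.ne',
            one_mul]
      have hmemf' : gf' ∈ suppFunctionals (x n) := by
        constructor
        · rw [hgfdef', norm_smul lam⁻¹ (dcomp (ENNReal.ofReal p) (hP0 hpq) f' n),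
            Real.norm_eq_abs, abs_of_pos (inv_pos.mpr hlam),
            (char' n).2, ← hlamdef, inv_mul_cancel₀ hlam.ne']
        · rw [hgfdef']
          simp only [ContinuousLinearMap.smul_apply, smul_eq_mul]
          rw [(char' n).1, (char' n).2, ← hlamdef, ← mul_assoc, inv_mul_cancel₀ hlam.ne',
            one_mul]
      have hdiff : dcomp (ENNReal.ofReal p) (hP0 hpq) f n
          - dcomp (ENNReal.ofReal p) (hP0 hpq) f' n = lam • (gf - gf') := by
        rw [hgfdef, hgfdef', smul_sub, smul_inv_smul₀ hlam.ne', smul_inv_smul₀ hlam.ne']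
      have hdistle : ‖gf - gf'‖ ≤ D n := by
        rw [← dist_eq_norm, hDdef]
        simp only [if_neg h0]
        exact Metric.dist_le_diam_of_mem (supp_bounded (x n)) hmemf hmemf'
      have hnd : ‖dcomp (ENNReal.ofReal p) (hP0 hpq) f n
          - dcomp (ENNReal.ofReal p) (hP0 hpq) f' n‖ ≤ lam * D n := by
        rw [hdiff, norm_smul lam (gf - gf'), Real.norm_eq_abs, abs_of_pos hlam]
        exact mul_le_mul_of_nonneg_left hdistle hlam.le
      calc ‖dcomp (ENNReal.ofReal p) (hP0 hpq) f n
            - dcomp (ENNReal.ofReal p) (hP0 hpq) f' n‖ ^ q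
          ≤ (lam * D n) ^ q :=
            Real.rpow_le_rpow (norm_nonneg _) hnd hpq.symm.nonneg
        _ = lam ^ q * D n ^ q := Real.mul_rpow hlam.le (hD0 n)
        _ = (‖x n‖ / ‖x‖) ^ p * D n ^ q := by
            rw [hlamdef, lam_rpow_q hpq x hx n]
  · -- S ^ (1/q) ≤ diam
    have key : S ≤ (Metric.diam (suppFunctionals x)) ^ q := by
      refine Summable.tsum_le_of_sum_le hSsum (fun s => ?_)
      refine aux_le_of_forall_mul_le (Finset.sum_nonneg fun n _ =>
        mul_nonneg (ha0 n) (Real.rpow_nonneg (hD0 n) _)) (fun θ hθ0 hθ1 => ?_)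
      set σ := θ ^ (1/q) with hσdef
      have hσ0 : 0 < σ := Real.rpow_pos_of_pos hθ0 _
      have hσ1 : σ < 1 := Real.rpow_lt_one hθ0.le hθ1 (one_div_pos.mpr hpq.symm.pos)
      have hσq : σ ^ q = θ := by
        rw [hσdef, ← Real.rpow_mul hθ0.le, one_div_mul_cancel hpq.symm.ne_zero,
          Real.rpow_one]
      have hchoice : ∀ n, ∃ gg : (E n →L[ℝ] ℝ) × (E n →L[ℝ] ℝ),
          (x n ≠ 0 → (‖gg.1‖ = 1 ∧ gg.1 (x n) = ‖x n‖)
            ∧ (‖gg.2‖ = 1 ∧ gg.2 (x n) = ‖x n‖)) ∧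
          (x n = 0 → gg.1 = 0 ∧ gg.2 = 0) ∧
          (σ * D n ≤ dist gg.1 gg.2 ∨ D n = 0) := by
        intro n
        rcases eq_or_ne (x n) 0 with h0 | h0
        · exact ⟨(0,0), fun h => absurd h0 h, fun _ => ⟨rfl, rfl⟩,
            Or.inr (by rw [hDdef]; simp [h0])⟩
        · obtain ⟨g₀, hg₀n, hg₀v⟩ := exists_dual_vector ℝ (x n) (norm_ne_zero_iff.mpr h0)
          have hg₀v' : g₀ (x n) = ‖x n‖ := by exact_mod_cast hg₀v
          rcases (hD0 n).eq_or_lt with hDn | hDn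
          · exact ⟨(g₀, g₀), fun _ => ⟨⟨hg₀n, hg₀v'⟩, ⟨hg₀n, hg₀v'⟩⟩,
              fun h => absurd h h0, Or.inr hDn.symm⟩
          · have hDeq : D n = Metric.diam (suppFunctionals (x n)) := by
              rw [hDdef]; simp [h0]
            have hex : ∃ g1 ∈ suppFunctionals (x n), ∃ g2 ∈ suppFunctionals (x n),
                σ * D n < dist g1 g2 := by
              by_contra hcon
              push_neg at hcon
              have hle : Metric.diam (suppFunctionals (x n)) ≤ σ * D n :=
                Metric.diam_le_of_forall_dist_le
                  (mul_nonneg hσ0.le (hD0 n)) hcon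
              rw [← hDeq] at hle
              nlinarith
            obtain ⟨g1, hg1, g2, hg2, hd⟩ := hex
            exact ⟨(g1, g2), fun _ => ⟨⟨hg1.1, hg1.2⟩, ⟨hg2.1, hg2.2⟩⟩,
              fun h => absurd h h0, Or.inl hd.le⟩
      choose gg hgg1 hgg0 hggd using hchoice
      obtain ⟨G, hGn, hGx, hGc⟩ := supp_exists hpq x hx (fun n => (gg n).1)
        (fun n h0 => (hgg1 n h0).1) (fun n h0 => (hgg0 n h0).1)
      obtain ⟨G', hGn', hGx', hGc'⟩ := supp_exists hpq x hx (fun n => (gg n).2)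
        (fun n h0 => (hgg1 n h0).2) (fun n h0 => (hgg0 n h0).2)
      have hdistle : dist G G' ≤ Metric.diam (suppFunctionals x) :=
        Metric.dist_le_diam_of_mem (supp_bounded x) ⟨hGn, hGx⟩ ⟨hGn', hGx'⟩
      have hdisteq : dist G G'
          = (∑' n, ‖dcomp (ENNReal.ofReal p) (hP0 hpq) (G - G') n‖ ^ q) ^ (1/q) := by
        rw [dist_eq_norm, norm_eq_tsum_dcomp hpq (G - G')]
      have hsum_nonneg : ∀ n, (0:ℝ) ≤ ‖dcomp (ENNReal.ofReal p) (hP0 hpq) (G - G') n‖ ^ q :=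
        fun n => Real.rpow_nonneg (norm_nonneg _) _
      have hdq : (dist G G') ^ q
          = ∑' n, ‖dcomp (ENNReal.ofReal p) (hP0 hpq) (G - G') n‖ ^ q := by
        rw [hdisteq, ← Real.rpow_mul (tsum_nonneg hsum_nonneg), one_div_mul_cancel
          hpq.symm.ne_zero, Real.rpow_one]
      have hterm_ge : ∀ n ∈ s, θ * ((‖x n‖ / ‖x‖) ^ p * D n ^ q)
          ≤ ‖dcomp (ENNReal.ofReal p) (hP0 hpq) (G - G') n‖ ^ q := by
        intro n _
        have hsm : dcomp (ENNReal.ofReal p) (hP0 hpq) (G - G') n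
            = (‖x n‖ / ‖x‖) ^ (p-1) • ((gg n).1 - (gg n).2) := by
          rw [dcomp_sub, hGc n, hGc' n]; exact (smul_sub _ _ _).symm
        rw [hsm]
        rcases eq_or_ne (x n) 0 with h0 | h0
        · have : (‖x n‖ / ‖x‖) ^ p = 0 := by
            rw [h0, norm_zero, zero_div, Real.zero_rpow hpq.ne_zero]
          rw [this, zero_mul, mul_zero]
          exact Real.rpow_nonneg (norm_nonneg _) _
        · have hxn : (0:ℝ) < ‖x n‖ := norm_pos_iff.mpr h0
          have han : (0:ℝ) < ‖x n‖ / ‖x‖ := div_pos hxn hX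
          have hlam : (0:ℝ) < (‖x n‖ / ‖x‖) ^ (p-1) := Real.rpow_pos_of_pos han _
          have hdge : σ * D n ≤ ‖(gg n).1 - (gg n).2‖ := by
            rcases hggd n with hcase | hcase
            · rwa [← dist_eq_norm]
            · rw [hcase, mul_zero]; exact norm_nonneg _
          have hnormsmul : ‖(‖x n‖ / ‖x‖) ^ (p-1) • ((gg n).1 - (gg n).2)‖
              = (‖x n‖ / ‖x‖) ^ (p-1) * ‖(gg n).1 - (gg n).2‖ := by
            rw [norm_smul ((‖x n‖ / ‖x‖) ^ (p-1)) ((gg n).1 - (gg n).2),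
              Real.norm_eq_abs, abs_of_pos hlam]
          rw [hnormsmul, Real.mul_rpow hlam.le (norm_nonneg _), lam_rpow_q hpq x hx n]
          have h2 : (σ * D n) ^ q ≤ ‖(gg n).1 - (gg n).2‖ ^ q :=
            Real.rpow_le_rpow (mul_nonneg hσ0.le (hD0 n)) hdge hpq.symm.nonneg
          rw [Real.mul_rpow hσ0.le (hD0 n), hσq] at h2
          calc θ * ((‖x n‖ / ‖x‖) ^ p * D n ^ q)
              = (‖x n‖ / ‖x‖) ^ p * (θ * D n ^ q) := by ring
            _ ≤ (‖x n‖ / ‖x‖) ^ p * ‖(gg n).1 - (gg n).2‖ ^ q :=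
                mul_le_mul_of_nonneg_left h2 (ha0 n)
      calc θ * ∑ n ∈ s, (‖x n‖ / ‖x‖) ^ p * D n ^ q
          = ∑ n ∈ s, θ * ((‖x n‖ / ‖x‖) ^ p * D n ^ q) := Finset.mul_sum _ _ _
        _ ≤ ∑ n ∈ s, ‖dcomp (ENNReal.ofReal p) (hP0 hpq) (G - G') n‖ ^ q :=
            Finset.sum_le_sum hterm_ge
        _ ≤ ∑' n, ‖dcomp (ENNReal.ofReal p) (hP0 hpq) (G - G') n‖ ^ q :=
            Summable.sum_le_tsum s (fun n _ => hsum_nonneg n) (summable_dcomp hpq (G - G'))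
        _ = (dist G G') ^ q := hdq.symm
        _ ≤ (Metric.diam (suppFunctionals x)) ^ q :=
            Real.rpow_le_rpow dist_nonneg hdistle hpq.symm.nonneg
    have h3 := Real.rpow_le_rpow hS0 key hpq.symm.one_div_nonneg
    rwa [← Real.rpow_mul Metric.diam_nonneg, mul_one_div, div_self hpq.symm.ne_zero,
      Real.rpow_one] at h3

end Final

/-- For 1 < p < ∞ with conjugate q and a nonzero `x = (x_n)` in ⊕_p E_n, the diameter of
the set of support functionals of `x` is
`(∑_n (‖x_n‖^p/‖x‖^p) · D(x_n)^q)^{1/q}`, where `D(x_n)` is the diameter of the set of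
support functionals of `x_n` (the n-th term vanishing when `x_n = 0`). -/
theorem stmt7 (E : ℕ → Type*) [∀ n, NormedAddCommGroup (E n)]
    [∀ n, NormedSpace ℝ (E n)]
    (p q : ℝ) (hpq : p.HolderConjugate q)
    [Fact (1 ≤ ENNReal.ofReal p)] [Fact (1 ≤ ENNReal.ofReal q)]
    (x : lp E (ENNReal.ofReal p)) (hx : x ≠ 0) :
    Metric.diam (suppFunctionals x) =
      (∑' n, (‖x n‖ ^ p / ‖x‖ ^ p) *
        (if x n = 0 then 0 else Metric.diam (suppFunctionals (x n))) ^ q) ^ (1 / q) := by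
  exact stmt7' hpq x hx
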